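/- Let v : 2^N → ℝ≥0 be monotone with v(∅)=0, and let F = {p ∈ ℝ^N_{≥0} : p(T) ≤ v(N) - v(N\T) for all T ⊆ N}. If p lies in the Pareto frontier of F, then for every i ∈ N there exists a set T ⊆ N with i ∉ T such that v(T) - p(T) = v(N) - p(N). -/

import Mathlib

/-- If `p` lies in the Pareto frontier of `F`, then for every `i`
there is a set `T` not containing `i` with `v(T) - p(T) = v(N) - p(N)`. -/
theorem stmt2 {n : ℕ} (v : Finset (Fin n) → ℝ)
    (hmono : ∀ S T : Finset (Fin n), S ⊆ T → v S ≤ v T)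
    (hv0 : v ∅ = 0)
    (p : Fin n → ℝ)
    (hpF : (∀ i, 0 ≤ p i) ∧
      ∀ T : Finset (Fin n), ∑ i ∈ T, p i ≤ v Finset.univ - v (Finset.univ \ T))
    (hpareto : ¬ ∃ p' : Fin n → ℝ, ((∀ i, 0 ≤ p' i) ∧
        ∀ T : Finset (Fin n), ∑ i ∈ T, p' i ≤ v Finset.univ - v (Finset.univ \ T)) ∧
      (∀ i, p i ≤ p' i) ∧ ∑ i, p i < ∑ i, p' i) :
    ∀ i : Fin n, ∃ T : Finset (Fin n), i ∉ T ∧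
      v T - ∑ j ∈ T, p j = v Finset.univ - ∑ j, p j := by
  obtain ⟨hp0, hpc⟩ := hpF
  intro i
  by_contra h
  push_neg at h
  set M := v Finset.univ - ∑ j, p j with hM
  have key : ∀ T : Finset (Fin n), v T - ∑ j ∈ T, p j ≤ M := by
    intro T
    have h1 := hpc (Finset.univ \ T)
    have h2 : Finset.univ \ (Finset.univ \ T) = T := by simp
    rw [h2] at h1
    have h3 : ∑ j ∈ Finset.univ \ T, p j + ∑ j ∈ T, p j = ∑ j, p j :=
      Finset.sum_sdiff (Finset.subset_univ T)
    simp only [hM]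
    linarith
  have strict : ∀ T : Finset (Fin n), i ∉ T → v T - ∑ j ∈ T, p j < M := by
    intro T hT
    exact lt_of_le_of_ne (key T) (h T hT)
  set D : Finset (Finset (Fin n)) :=
    Finset.univ.filter (fun S => i ∉ S) with hD
  have hne : D.Nonempty := ⟨∅, by simp [hD]⟩
  set ε : ℝ := D.inf' hne (fun S => M - (v S - ∑ j ∈ S, p j)) with hε
  have hεpos : 0 < ε := by
    rw [hε, Finset.lt_inf'_iff]
    intro S hS
    have : i ∉ S := by simpa [hD] using hS
    linarith [strict S this]
  have hεle : ∀ S : Finset (Fin n), i ∉ S → ε ≤ M - (v S - ∑ j ∈ S, p j) := by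
    intro S hS
    exact Finset.inf'_le _ (by simp [hD, hS])
  apply hpareto
  refine ⟨fun j => p j + if j = i then ε else 0, ⟨?_, ?_⟩, ?_, ?_⟩
  · intro j
    have := hp0 j
    simp only
    split <;> linarith
  · intro T
    have hsplit : ∑ j ∈ T, (p j + if j = i then ε else 0)
        = ∑ j ∈ T, p j + ∑ j ∈ T, (if j = i then ε else 0) :=
      Finset.sum_add_distrib
    by_cases hiT : i ∈ T
    · have hif : ∑ j ∈ T, (if j = i then ε else 0) = ε := by
        rw [Finset.sum_ite_eq' T i (fun _ => ε)]
        simp [hiT]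
      have hS : i ∉ Finset.univ \ T := by simp [hiT]
      have h4 := hεle _ hS
      have h3 : ∑ j ∈ Finset.univ \ T, p j + ∑ j ∈ T, p j = ∑ j, p j :=
        Finset.sum_sdiff (Finset.subset_univ T)
      rw [hsplit, hif]
      simp only [hM] at h4
      linarith
    · have hif : ∑ j ∈ T, (if j = i then ε else 0) = 0 := by
        rw [Finset.sum_ite_eq' T i (fun _ => ε)]
        simp [hiT]
      rw [hsplit, hif, add_zero]
      exact hpc T
  · intro j
    simp only
    split <;> linarith
  · have hsplit : ∑ j, (p j + if j = i then ε else 0)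
        = ∑ j, p j + ∑ j : Fin n, (if j = i then ε else 0) :=
      Finset.sum_add_distrib
    have hif : ∑ j : Fin n, (if j = i then ε else 0) = ε := by
      rw [Finset.sum_ite_eq' Finset.univ i (fun _ => ε)]
      simp
    rw [hsplit, hif]
    linarith
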